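/- arXiv:1106.4591 — 2 statements merged into one kernel-verified Lean document; each statement's English description precedes it below -/
import Mathlib

section
/- There is an absolute constant C > 0 with the following property. Let a : ℤ² → ℝ satisfy sup_k (1+|k|)^N |a_k| < ∞ for every N ∈ ℕ, and for j ∈ ℤ² set S_j := Σ_{l+m=j, l,m∈ℤ²∖{0,e,−e}} (l ∧ m)(1/|l| − 1/|m|) a_l a_m. Then |Σ_{k∈ℤ²₊} (k₁ + 1/2)(a_k S_{k+e} + a_{k+e} S_k)| ≤ C · (Σ_{l∈ℤ²∖{0,e,−e}} a_l²) · (Σ_{k∈ℤ²₊} |k| · |k₁ + 1/2| · |a_k|). -/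
open scoped BigOperators

noncomputable section

/-- Euclidean norm of a lattice point `k ∈ ℤ²`. -/
def znorm (k : ℤ × ℤ) : ℝ := Real.sqrt ((k.1 : ℝ) ^ 2 + (k.2 : ℝ) ^ 2)

/-- Wedge product `l ∧ m = l₁ m₂ − l₂ m₁`. -/
def wedge (l m : ℤ × ℤ) : ℝ := ((l.1 * m.2 - l.2 * m.1 : ℤ) : ℝ)

/-- `S_j = Σ_{l+m=j, l,m ∉ {0,e,−e}} (l ∧ m)(1/|l| − 1/|m|) a_l a_m`,
parametrized by `l` (with `m = j − l`). -/
def Ssum (a : ℤ × ℤ → ℝ) (j : ℤ × ℤ) : ℝ :=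
  ∑' l : ℤ × ℤ,
    if l ≠ 0 ∧ l ≠ (1, 0) ∧ l ≠ (-1, 0) ∧
        j - l ≠ 0 ∧ j - l ≠ (1, 0) ∧ j - l ≠ (-1, 0) then
      wedge l (j - l) * (1 / znorm l - 1 / znorm (j - l)) * a l * a (j - l)
    else 0

lemma znorm_nonneg (k : ℤ × ℤ) : 0 ≤ znorm k := Real.sqrt_nonneg _

lemma znorm_sq (k : ℤ × ℤ) : znorm k ^ 2 = (k.1:ℝ)^2 + (k.2:ℝ)^2 := by
  rw [znorm, Real.sq_sqrt] ; positivity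

lemma abs_fst_le (k : ℤ × ℤ) : |(k.1:ℝ)| ≤ znorm k := by
  rw [znorm, show |(k.1:ℝ)| = Real.sqrt ((k.1:ℝ)^2) by rw [Real.sqrt_sq_eq_abs]]
  apply Real.sqrt_le_sqrt; nlinarith [sq_nonneg (k.2:ℝ)]

lemma abs_snd_le (k : ℤ × ℤ) : |(k.2:ℝ)| ≤ znorm k := by
  rw [znorm, show |(k.2:ℝ)| = Real.sqrt ((k.2:ℝ)^2) by rw [Real.sqrt_sq_eq_abs]]
  apply Real.sqrt_le_sqrt; nlinarith [sq_nonneg (k.1:ℝ)]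

lemma one_le_znorm {k : ℤ × ℤ} (hk : k ≠ 0) : 1 ≤ znorm k := by
  have h1 : (1:ℤ) ≤ k.1^2 + k.2^2 := by
    by_contra hc
    push_neg at hc
    have := sq_nonneg k.1; have := sq_nonneg k.2
    have e1 : k.1 = 0 := by nlinarith
    have e2 : k.2 = 0 := by nlinarith
    exact hk (Prod.ext e1 e2)
  have : (1:ℝ) ≤ (k.1:ℝ)^2 + (k.2:ℝ)^2 := by exact_mod_cast h1
  rw [znorm]
  nlinarith [Real.sq_sqrt (by positivity : (0:ℝ) ≤ (k.1:ℝ)^2+(k.2:ℝ)^2),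
    Real.sqrt_nonneg ((k.1:ℝ)^2+(k.2:ℝ)^2)]

lemma znorm_eq_cabs (m : ℤ × ℤ) : znorm m = ‖(⟨m.1, m.2⟩ : ℂ)‖ := by
  rw [znorm, Complex.norm_def, Complex.normSq_mk]; ring_nf
lemma znorm_add_le (k l : ℤ × ℤ) : znorm (k + l) ≤ znorm k + znorm l := by
  have h := norm_add_le (⟨k.1, k.2⟩ : ℂ) (⟨l.1, l.2⟩ : ℂ)
  rw [znorm_eq_cabs, znorm_eq_cabs, znorm_eq_cabs]
  have e : ((⟨(k.1:ℝ),(k.2:ℝ)⟩ : ℂ) + ⟨(l.1:ℝ),(l.2:ℝ)⟩) = (⟨((k+l).1:ℝ), ((k+l).2:ℝ)⟩ : ℂ) := by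
    simp [Complex.ext_iff, Prod.fst_add, Prod.snd_add]
  rw [e] at h; exact h

lemma znorm_neg (k : ℤ × ℤ) : znorm (-k) = znorm k := by
  rw [znorm, znorm]; push_cast [Prod.fst_neg, Prod.snd_neg]; ring_nf

lemma abs_wedge_le (l m : ℤ × ℤ) : |wedge l m| ≤ znorm l * znorm m := by
  have h2 : wedge l m ^ 2 ≤ (znorm l * znorm m)^2 := by
    rw [mul_pow, znorm_sq, znorm_sq, wedge]
    push_cast
    nlinarith [sq_nonneg ((l.1:ℝ)*m.1 + l.2*m.2)]
  have h3 : 0 ≤ znorm l * znorm m := mul_nonneg (znorm_nonneg l) (znorm_nonneg m)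
  nlinarith [abs_nonneg (wedge l m), sq_abs (wedge l m)]

lemma wedge_add_self (l m : ℤ × ℤ) : wedge l (l + m) = wedge l m := by
  rw [wedge, wedge]; push_cast [Prod.fst_add, Prod.snd_add]; ring

lemma wedge_antisymm (l m : ℤ × ℤ) : wedge m l = -wedge l m := by
  rw [wedge, wedge]; push_cast; ring

lemma coef_le_aux {l m : ℤ × ℤ} (hl : l ≠ 0) (hm : m ≠ 0) (hlm : znorm l ≤ znorm m) :
    |wedge l m * (1 / znorm l - 1 / znorm m)| ≤ 2 * znorm (l + m) := by
  set L := znorm l with hL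
  set M := znorm m with hM
  set J := znorm (l + m) with hJ
  have hL1 : 1 ≤ L := one_le_znorm hl
  have hM1 : 1 ≤ M := one_le_znorm hm
  have hJ0 : 0 ≤ J := znorm_nonneg _
  have hML : M - L ≤ J := by
    have e : (l + m) + -l = m := by abel
    have := znorm_add_le (l + m) (-l)
    rw [znorm_neg, e] at this
    linarith
  have hJ2M : J ≤ 2 * M := by
    have := znorm_add_le l m
    linarith
  have hW : |wedge l m| ≤ L * J := by
    have := abs_wedge_le l (l + m)
    rw [wedge_add_self] at this
    exact this
  have hLpos : (0:ℝ) < L := by linarith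
  have hMpos : (0:ℝ) < M := by linarith
  have habs : |1 / L - 1 / M| = (M - L) / (L * M) := by
    rw [abs_of_nonneg, div_sub_div _ _ (ne_of_gt hLpos) (ne_of_gt hMpos)]
    · ring_nf
    · have : 1 / M ≤ 1 / L := one_div_le_one_div_of_le hLpos hlm
      linarith
  rw [abs_mul, habs, mul_div_assoc' , div_le_iff₀ (by positivity)]
  nlinarith [abs_nonneg (wedge l m)]

lemma coef_le {l m : ℤ × ℤ} (hl : l ≠ 0) (hm : m ≠ 0) :
    |wedge l m * (1 / znorm l - 1 / znorm m)| ≤ 2 * znorm (l + m) := by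
  rcases le_total (znorm l) (znorm m) with h | h
  · exact coef_le_aux hl hm h
  · have := coef_le_aux hm hl h
    rw [wedge_antisymm, add_comm m l] at this
    have e : wedge l m * (1 / znorm l - 1 / znorm m)
        = -wedge l m * (1 / znorm m - 1 / znorm l) := by ring
    rw [e]
    exact this

lemma summable_nat_one_div : Summable (fun n : ℕ => 1/((1+(n:ℝ))^2)) := by
  have := Real.summable_one_div_nat_pow.mpr (le_refl 2)
  have h := (summable_nat_add_iff 1).mpr this
  apply h.congr
  intro n; push_cast; ring_nf

lemma summable_int_one_div : Summable (fun n : ℤ => 1/((1+|(n:ℝ)|)^2)) := by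
  apply Summable.of_nat_of_neg
  · apply summable_nat_one_div.congr; intro n; simp
  · apply summable_nat_one_div.congr; intro n; simp

lemma base_summable : Summable (fun k : ℤ × ℤ => ((1+znorm k)^4)⁻¹) := by
  have hs := (summable_int_one_div.mul_of_nonneg summable_int_one_div
    (fun n => by positivity) (fun n => by positivity))
  apply Summable.of_nonneg_of_le (fun k => by positivity) _ hs
  intro k
  have h1 : (1:ℝ) + |(k.1:ℝ)| ≤ 1 + znorm k := by linarith [abs_fst_le k]
  have h2 : (1:ℝ) + |(k.2:ℝ)| ≤ 1 + znorm k := by linarith [abs_snd_le k]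
  have p1 : (0:ℝ) < 1 + |(k.1:ℝ)| := by positivity
  have p2 : (0:ℝ) < 1 + |(k.2:ℝ)| := by positivity
  rw [one_div, one_div, ← mul_inv]
  apply inv_anti₀ (by positivity)
  calc (1+|(k.1:ℝ)|)^2 * (1+|(k.2:ℝ)|)^2 ≤ (1+znorm k)^2 * (1+znorm k)^2 := by
        apply mul_le_mul <;> nlinarith
    _ = (1+znorm k)^4 := by ring

lemma znorm_e : znorm (1, 0) = 1 := by
  rw [znorm]; norm_num

lemma znorm_ge_one_of_snd {k : ℤ × ℤ} (h : 1 ≤ k.2) : 1 ≤ znorm k := by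
  have h2 := abs_snd_le k
  have : (1:ℝ) ≤ |(k.2:ℝ)| := by
    rw [abs_of_nonneg (by exact_mod_cast (by omega : (0:ℤ) ≤ k.2))]
    exact_mod_cast h
  linarith

lemma znorm_add_e_le {k : ℤ × ℤ} (h : 1 ≤ k.2) : znorm (k + (1, 0)) ≤ 2 * znorm k := by
  have := znorm_add_le k (1, 0)
  rw [znorm_e] at this
  linarith [znorm_ge_one_of_snd h]

lemma znorm_sub_e_le {k : ℤ × ℤ} (h : 1 ≤ k.2) : znorm (k - (1, 0)) ≤ 2 * znorm k := by
  have := znorm_add_le k (-(1, 0))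
  rw [znorm_neg, znorm_e] at this
  rw [sub_eq_add_neg]
  linarith [znorm_ge_one_of_snd h]

lemma half_bound (n : ℤ) : |(n:ℝ) - 1/2| ≤ 3 * |(n:ℝ) + 1/2| := by
  rcases le_or_gt 0 n with h | h
  · have h' : (0:ℝ) ≤ (n:ℝ) := by exact_mod_cast h
    rw [abs_of_nonneg (by linarith : (0:ℝ) ≤ (n:ℝ) + 1/2), abs_le]
    constructor <;> linarith
  · have h' : (n:ℝ) ≤ -1 := by exact_mod_cast (by omega : n ≤ -1)
    rw [abs_of_nonpos (by linarith), abs_of_nonpos (by linarith)]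
    linarith

lemma abs_half_le (k : ℤ × ℤ) : |(k.1:ℝ) + 1/2| ≤ 1 + znorm k := by
  have := abs_fst_le k
  calc |(k.1:ℝ) + 1/2| ≤ |(k.1:ℝ)| + |1/2| := abs_add_le _ _
    _ ≤ 1 + znorm k := by rw [abs_of_nonneg (by norm_num : (0:ℝ) ≤ 1/2)]; linarith

lemma summable_decay (a : ℤ × ℤ → ℝ)
    (h : ∀ N : ℕ, ∃ M : ℝ, ∀ k : ℤ × ℤ, (1 + znorm k) ^ N * |a k| ≤ M) (n : ℕ) :
    Summable (fun k => (1 + znorm k) ^ n * |a k|) := by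
  obtain ⟨M, hM⟩ := h (n + 4)
  apply Summable.of_nonneg_of_le
    (fun k => mul_nonneg (pow_nonneg (by linarith [znorm_nonneg k]) _) (abs_nonneg _)) _
    (base_summable.mul_left M)
  intro k
  have hz := znorm_nonneg k
  rw [← div_eq_mul_inv, le_div_iff₀ (by positivity)]
  calc (1 + znorm k) ^ n * |a k| * (1 + znorm k) ^ 4
      = (1 + znorm k) ^ (n + 4) * |a k| := by rw [pow_add]; ring
    _ ≤ M := hM k

lemma summable_sq (a : ℤ × ℤ → ℝ)
    (h : ∀ N : ℕ, ∃ M : ℝ, ∀ k : ℤ × ℤ, (1 + znorm k) ^ N * |a k| ≤ M) :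
    Summable (fun l => a l ^ 2) := by
  obtain ⟨M, hM⟩ := h 0
  have hM' : ∀ k, |a k| ≤ M := fun k => by simpa using hM k
  apply Summable.of_nonneg_of_le (fun l => sq_nonneg _) _
    ((summable_decay a h 0).mul_left M)
  intro l
  simp only [pow_zero, one_mul]
  calc a l ^ 2 = |a l| * |a l| := by rw [← sq_abs]; ring
    _ ≤ M * |a l| := mul_le_mul_of_nonneg_right (hM' l) (abs_nonneg _)

lemma summable_T (a : ℤ × ℤ → ℝ)
    (h : ∀ N : ℕ, ∃ M : ℝ, ∀ k : ℤ × ℤ, (1 + znorm k) ^ N * |a k| ≤ M) :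
    Summable (fun k : ℤ × ℤ =>
      if 1 ≤ k.2 then znorm k * |(k.1 : ℝ) + 1 / 2| * |a k| else 0) := by
  apply Summable.of_nonneg_of_le _ _ (summable_decay a h 2)
  · intro k
    split
    · exact mul_nonneg (mul_nonneg (znorm_nonneg k) (abs_nonneg _)) (abs_nonneg _)
    · exact le_refl 0
  · intro k
    have hz := znorm_nonneg k
    have hh := abs_half_le k
    have hnn : (0:ℝ) ≤ (1 + znorm k) ^ 2 * |a k| :=
      mul_nonneg (pow_nonneg (by linarith) _) (abs_nonneg _)
    split
    · have : znorm k * |(k.1:ℝ) + 1/2| ≤ (1 + znorm k) * (1 + znorm k) :=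
        mul_le_mul (by linarith) hh (abs_nonneg _) (by linarith)
      calc znorm k * |(k.1:ℝ) + 1/2| * |a k|
          ≤ (1 + znorm k) * (1 + znorm k) * |a k| :=
            mul_le_mul_of_nonneg_right this (abs_nonneg _)
        _ = (1 + znorm k) ^ 2 * |a k| := by ring
    · exact hnn

variable {a : ℤ × ℤ → ℝ}

/-- the indicator square function -/
def F (a : ℤ × ℤ → ℝ) (l : ℤ × ℤ) : ℝ :=
  if l ≠ 0 ∧ l ≠ (1, 0) ∧ l ≠ (-1, 0) then a l ^ 2 else 0

lemma F_nonneg (l : ℤ × ℤ) : 0 ≤ F a l := by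
  rw [F]; split <;> positivity

lemma Ssum_term_le (j l : ℤ × ℤ) :
    |if l ≠ 0 ∧ l ≠ (1, 0) ∧ l ≠ (-1, 0) ∧
        j - l ≠ 0 ∧ j - l ≠ (1, 0) ∧ j - l ≠ (-1, 0) then
      wedge l (j - l) * (1 / znorm l - 1 / znorm (j - l)) * a l * a (j - l)
    else 0| ≤ znorm j * (F a l + F a (j - l)) := by
  split
  case isFalse h =>
    simp only [abs_zero]
    have := F_nonneg (a := a) l; have := F_nonneg (a := a) (j - l)
    have := znorm_nonneg j
    positivity
  case isTrue h =>
    obtain ⟨h1, h2, h3, h4, h5, h6⟩ := h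
    have hc := coef_le h1 h4
    rw [show l + (j - l) = j by abel] at hc
    have hFl : F a l = a l ^ 2 := if_pos ⟨h1, h2, h3⟩
    have hFm : F a (j - l) = a (j - l) ^ 2 := if_pos ⟨h4, h5, h6⟩
    rw [hFl, hFm]
    calc |wedge l (j - l) * (1 / znorm l - 1 / znorm (j - l)) * a l * a (j - l)|
        = |wedge l (j - l) * (1 / znorm l - 1 / znorm (j - l))| * (|a l| * |a (j - l)|) := by
          rw [abs_mul, abs_mul, mul_assoc]
      _ ≤ (2 * znorm j) * (|a l| * |a (j - l)|) := by
          apply mul_le_mul_of_nonneg_right hc (by positivity)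
      _ ≤ znorm j * (a l ^ 2 + a (j - l) ^ 2) := by
          have hz := znorm_nonneg j
          nlinarith [sq_nonneg (|a l| - |a (j - l)|), sq_abs (a l), sq_abs (a (j - l)),
            abs_nonneg (a l), abs_nonneg (a (j - l))]

lemma summable_F (hsq : Summable fun l => a l ^ 2) : Summable (F a) := by
  apply Summable.of_nonneg_of_le (F_nonneg) _ hsq
  intro l; rw [F]; split
  · exact le_refl _
  · positivity

lemma abs_Ssum_le (hsq : Summable fun l : ℤ × ℤ => a l ^ 2) (j : ℤ × ℤ) :
    |Ssum a j| ≤ 2 * znorm j *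
      ∑' l : ℤ × ℤ, if l ≠ 0 ∧ l ≠ (1, 0) ∧ l ≠ (-1, 0) then a l ^ 2 else 0 := by
  have hF : Summable (F a) := summable_F hsq
  have hFj : Summable (fun l => F a (j - l)) := by
    apply Summable.of_nonneg_of_le (fun l => F_nonneg _) (fun l => le_refl _)
    exact ((Equiv.subLeft j).summable_iff (f := F a)).mpr hF
  have hg : Summable (fun l => znorm j * (F a l + F a (j - l))) := by
    apply Summable.mul_left
    exact hF.add hFj
  have habs : Summable (fun l => |if l ≠ 0 ∧ l ≠ (1, 0) ∧ l ≠ (-1, 0) ∧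
        j - l ≠ 0 ∧ j - l ≠ (1, 0) ∧ j - l ≠ (-1, 0) then
      wedge l (j - l) * (1 / znorm l - 1 / znorm (j - l)) * a l * a (j - l)
    else 0|) := by
    apply Summable.of_nonneg_of_le (fun l => abs_nonneg _) (fun l => Ssum_term_le j l) hg
  have h1 : |Ssum a j| ≤ ∑' l, |if l ≠ 0 ∧ l ≠ (1, 0) ∧ l ≠ (-1, 0) ∧
        j - l ≠ 0 ∧ j - l ≠ (1, 0) ∧ j - l ≠ (-1, 0) then
      wedge l (j - l) * (1 / znorm l - 1 / znorm (j - l)) * a l * a (j - l)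
    else 0| := by
    rw [Ssum]
    have := norm_tsum_le_tsum_norm (f := fun l : ℤ × ℤ => if l ≠ 0 ∧ l ≠ (1, 0) ∧ l ≠ (-1, 0) ∧
        j - l ≠ 0 ∧ j - l ≠ (1, 0) ∧ j - l ≠ (-1, 0) then
      wedge l (j - l) * (1 / znorm l - 1 / znorm (j - l)) * a l * a (j - l)
    else 0) (by simpa using habs)
    simpa using this
  have h2 := Summable.tsum_le_tsum (Ssum_term_le (a := a) j) habs hg
  have h3 : ∑' l, znorm j * (F a l + F a (j - l))
      = znorm j * ((∑' l, F a l) + ∑' l, F a (j - l)) := by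
    rw [tsum_mul_left, Summable.tsum_add hF hFj]
  have h4 : ∑' l, F a (j - l) = ∑' l, F a l := by
    exact (Equiv.subLeft j).tsum_eq (F a)
  have h5 : ∑' l, F a l = ∑' l : ℤ × ℤ, if l ≠ 0 ∧ l ≠ (1, 0) ∧ l ≠ (-1, 0) then a l ^ 2 else 0 := rfl
  calc |Ssum a j| ≤ _ := h1
    _ ≤ _ := h2
    _ = _ := h3
    _ = 2 * znorm j * ∑' l, F a l := by rw [h4]; ring
    _ = _ := by rw [h5]

/-- Bound on the error term `σ`:
`|Σ_{k∈ℤ²₊} (k₁+1/2)(a_k S_{k+e} + a_{k+e} S_k)| ≤ C (Σ_{l∉{0,±e}} a_l²) (Σ_{k∈ℤ²₊} |k||k₁+1/2||a_k|)`. -/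
theorem sigma_term_bound :
    ∃ C : ℝ, 0 < C ∧
      ∀ a : ℤ × ℤ → ℝ,
        (∀ N : ℕ, ∃ M : ℝ, ∀ k : ℤ × ℤ, (1 + znorm k) ^ N * |a k| ≤ M) →
        |∑' k : ℤ × ℤ,
            if 1 ≤ k.2 then
              ((k.1 : ℝ) + 1 / 2) *
                (a k * Ssum a (k + (1, 0)) + a (k + (1, 0)) * Ssum a k)
            else 0| ≤
          C * (∑' l : ℤ × ℤ, if l ≠ 0 ∧ l ≠ (1, 0) ∧ l ≠ (-1, 0) then a l ^ 2 else 0) *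
            ∑' k : ℤ × ℤ,
              if 1 ≤ k.2 then znorm k * |(k.1 : ℝ) + 1 / 2| * |a k| else 0 := by
  refine ⟨16, by norm_num, fun a ha => ?_⟩
  set A : ℝ := ∑' l : ℤ × ℤ, if l ≠ 0 ∧ l ≠ (1, 0) ∧ l ≠ (-1, 0) then a l ^ 2 else 0 with hA
  set Tt : (ℤ × ℤ) → ℝ :=
    fun k => if 1 ≤ k.2 then znorm k * |(k.1 : ℝ) + 1 / 2| * |a k| else 0 with hTt
  have hTtnn : ∀ k, 0 ≤ Tt k := by
    intro k; rw [hTt]; dsimp only; split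
    · exact mul_nonneg (mul_nonneg (znorm_nonneg k) (abs_nonneg _)) (abs_nonneg _)
    · exact le_refl 0
  have hsq := summable_sq a ha
  have hT := summable_T a ha
  have hAnn : 0 ≤ A := tsum_nonneg (fun l => by split <;> positivity)
  -- the two bounding functions
  set H1 : (ℤ × ℤ) → ℝ := fun k =>
    if 1 ≤ k.2 then |(k.1:ℝ) + 1/2| * |a k| * (2 * znorm (k + (1,0)) * A) else 0 with hH1
  set H2 : (ℤ × ℤ) → ℝ := fun k =>
    if 1 ≤ k.2 then |(k.1:ℝ) + 1/2| * |a (k + (1,0))| * (2 * znorm k * A) else 0 with hH2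
  have hH1nn : ∀ k, 0 ≤ H1 k := by
    intro k; rw [hH1]; dsimp only; split
    · exact mul_nonneg (mul_nonneg (abs_nonneg _) (abs_nonneg _))
        (mul_nonneg (mul_nonneg (by norm_num) (znorm_nonneg _)) hAnn)
    · exact le_refl 0
  have hH2nn : ∀ k, 0 ≤ H2 k := by
    intro k; rw [hH2]; dsimp only; split
    · exact mul_nonneg (mul_nonneg (abs_nonneg _) (abs_nonneg _))
        (mul_nonneg (mul_nonneg (by norm_num) (znorm_nonneg _)) hAnn)
    · exact le_refl 0
  -- pointwise bound of the main term
  have hpt : ∀ k : ℤ × ℤ,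
      |if 1 ≤ k.2 then ((k.1 : ℝ) + 1 / 2) *
          (a k * Ssum a (k + (1, 0)) + a (k + (1, 0)) * Ssum a k) else 0|
        ≤ H1 k + H2 k := by
    intro k
    rw [hH1, hH2]; dsimp only
    split
    case isFalse h => simp [hH1nn, hH2nn]
    case isTrue h =>
      have hS1 := abs_Ssum_le hsq (k + (1,0))
      have hS2 := abs_Ssum_le hsq k
      rw [← hA] at hS1 hS2
      calc |((k.1 : ℝ) + 1 / 2) *
          (a k * Ssum a (k + (1, 0)) + a (k + (1, 0)) * Ssum a k)|
          ≤ |(k.1:ℝ) + 1/2| * (|a k| * |Ssum a (k + (1,0))| + |a (k + (1,0))| * |Ssum a k|) := by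
            rw [abs_mul]
            apply mul_le_mul_of_nonneg_left _ (abs_nonneg _)
            calc |a k * Ssum a (k + (1, 0)) + a (k + (1, 0)) * Ssum a k|
                ≤ |a k * Ssum a (k + (1, 0))| + |a (k + (1, 0)) * Ssum a k| := abs_add_le _ _
              _ = |a k| * |Ssum a (k + (1,0))| + |a (k + (1,0))| * |Ssum a k| := by
                  rw [abs_mul, abs_mul]
        _ ≤ |(k.1:ℝ) + 1/2| * (|a k| * (2 * znorm (k + (1,0)) * A)
              + |a (k + (1,0))| * (2 * znorm k * A)) := by
            apply mul_le_mul_of_nonneg_left _ (abs_nonneg _)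
            apply add_le_add
            · exact mul_le_mul_of_nonneg_left hS1 (abs_nonneg _)
            · exact mul_le_mul_of_nonneg_left hS2 (abs_nonneg _)
        _ = |(k.1:ℝ) + 1/2| * |a k| * (2 * znorm (k + (1,0)) * A)
              + |(k.1:ℝ) + 1/2| * |a (k + (1,0))| * (2 * znorm k * A) := by ring
  -- H1 ≤ 4 A Tt
  have hH1le : ∀ k, H1 k ≤ 4 * A * Tt k := by
    intro k
    rw [hH1, hTt]; dsimp only
    split
    case isFalse h => simp
    case isTrue h =>
      have h1 : znorm (k + (1,0)) ≤ 2 * znorm k := znorm_add_e_le h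
      have hz := znorm_nonneg k
      calc |(k.1:ℝ) + 1/2| * |a k| * (2 * znorm (k + (1,0)) * A)
          ≤ |(k.1:ℝ) + 1/2| * |a k| * (2 * (2 * znorm k) * A) := by
            apply mul_le_mul_of_nonneg_left _ (mul_nonneg (abs_nonneg _) (abs_nonneg _))
            apply mul_le_mul_of_nonneg_right _ hAnn
            linarith
        _ = 4 * A * (znorm k * |(k.1:ℝ) + 1/2| * |a k|) := by ring
  -- H2 reindexed
  set σ : (ℤ × ℤ) ≃ (ℤ × ℤ) := Equiv.subRight ((1,0) : ℤ × ℤ) with hσ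
  have hH2σ : ∀ k : ℤ × ℤ, H2 (σ k) ≤ 12 * A * Tt k := by
    intro k
    have he1 : (σ k) + (1,0) = k := by rw [hσ]; simp [Equiv.subRight]
    have he2 : (σ k).2 = k.2 := by rw [hσ]; simp [Equiv.subRight]
    have he3 : ((σ k).1 : ℝ) = (k.1 : ℝ) - 1 := by
      rw [hσ]; simp [Equiv.subRight]
    rw [hH2, hTt]; dsimp only
    rw [he1, he2]
    split
    case isFalse h => simp
    case isTrue h =>
      have h1 : znorm (σ k) ≤ 2 * znorm k := by
        have : σ k = k - (1,0) := by rw [hσ]; simp [Equiv.subRight]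
        rw [this]; exact znorm_sub_e_le h
      have h2 : |((σ k).1:ℝ) + 1/2| ≤ 3 * |(k.1:ℝ) + 1/2| := by
        rw [he3, show (k.1:ℝ) - 1 + 1/2 = (k.1:ℝ) - 1/2 by ring]
        exact half_bound k.1
      have hz := znorm_nonneg k
      have hz' := znorm_nonneg (σ k)
      calc |((σ k).1:ℝ) + 1/2| * |a k| * (2 * znorm (σ k) * A)
          ≤ (3 * |(k.1:ℝ) + 1/2|) * |a k| * (2 * (2 * znorm k) * A) := by
            apply mul_le_mul
            · exact mul_le_mul_of_nonneg_right h2 (abs_nonneg _)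
            · apply mul_le_mul_of_nonneg_right _ hAnn; linarith
            · exact mul_nonneg (mul_nonneg (by norm_num) hz') hAnn
            · exact mul_nonneg (mul_nonneg (by positivity) (abs_nonneg _)) (abs_nonneg _)
        _ = 12 * A * (znorm k * |(k.1:ℝ) + 1/2| * |a k|) := by ring
  -- summabilities
  have hTt4 : Summable fun k => 4 * A * Tt k := hT.mul_left _
  have hTt12 : Summable fun k => 12 * A * Tt k := hT.mul_left _
  have hSH1 : Summable H1 := Summable.of_nonneg_of_le hH1nn hH1le hTt4
  have hSH2σ : Summable (fun k => H2 (σ k)) :=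
    Summable.of_nonneg_of_le (fun k => hH2nn _) hH2σ hTt12
  have hSH2 : Summable H2 := (σ.summable_iff (f := H2)).mp hSH2σ
  have hSsum : Summable (fun k : ℤ × ℤ =>
      |if 1 ≤ k.2 then ((k.1 : ℝ) + 1 / 2) *
          (a k * Ssum a (k + (1, 0)) + a (k + (1, 0)) * Ssum a k) else 0|) :=
    Summable.of_nonneg_of_le (fun k => abs_nonneg _) hpt (hSH1.add hSH2)
  -- put it together
  have step1 : |∑' k : ℤ × ℤ,
      if 1 ≤ k.2 then ((k.1 : ℝ) + 1 / 2) *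
          (a k * Ssum a (k + (1, 0)) + a (k + (1, 0)) * Ssum a k) else 0|
      ≤ ∑' k : ℤ × ℤ, |if 1 ≤ k.2 then ((k.1 : ℝ) + 1 / 2) *
          (a k * Ssum a (k + (1, 0)) + a (k + (1, 0)) * Ssum a k) else 0| := by
    have := norm_tsum_le_tsum_norm (f := fun k : ℤ × ℤ =>
      if 1 ≤ k.2 then ((k.1 : ℝ) + 1 / 2) *
          (a k * Ssum a (k + (1, 0)) + a (k + (1, 0)) * Ssum a k) else 0)
      (by simpa using hSsum)
    simpa using this
  have step2 := Summable.tsum_le_tsum hpt hSsum (hSH1.add hSH2)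
  have step3 : ∑' k, (H1 k + H2 k) = (∑' k, H1 k) + ∑' k, H2 k := Summable.tsum_add hSH1 hSH2
  have step4 : ∑' k, H1 k ≤ 4 * A * ∑' k, Tt k := by
    calc ∑' k, H1 k ≤ ∑' k, 4 * A * Tt k := Summable.tsum_le_tsum hH1le hSH1 hTt4
      _ = 4 * A * ∑' k, Tt k := tsum_mul_left
  have step5 : ∑' k, H2 k ≤ 12 * A * ∑' k, Tt k := by
    have e1 : ∑' k, H2 k = ∑' k, H2 (σ k) := (σ.tsum_eq H2).symm
    calc ∑' k, H2 k = ∑' k, H2 (σ k) := e1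
      _ ≤ ∑' k, 12 * A * Tt k := Summable.tsum_le_tsum hH2σ hSH2σ hTt12
      _ = 12 * A * ∑' k, Tt k := tsum_mul_left
  calc |∑' k : ℤ × ℤ,
      if 1 ≤ k.2 then ((k.1 : ℝ) + 1 / 2) *
          (a k * Ssum a (k + (1, 0)) + a (k + (1, 0)) * Ssum a k) else 0|
      ≤ ∑' k, |if 1 ≤ k.2 then ((k.1 : ℝ) + 1 / 2) *
          (a k * Ssum a (k + (1, 0)) + a (k + (1, 0)) * Ssum a k) else 0| := step1
    _ ≤ ∑' k, (H1 k + H2 k) := step2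
    _ = (∑' k, H1 k) + ∑' k, H2 k := step3
    _ ≤ 4 * A * (∑' k, Tt k) + 12 * A * ∑' k, Tt k := add_le_add step4 step5
    _ = 16 * A * ∑' k, Tt k := by ring
end
end

section
/- For every a : ℤ² → ℝ with sup_k (1+|k|)^N |a_k| < ∞ for every N ∈ ℕ, the following summation-by-parts identity holds: (1/2) Σ_{k∈ℤ²₊} k₂ (k₁ + 1/2) [ (1 − 1/|k|) a_k² − (1 − 1/|k+2e|) a_k a_{k+2e} − (1 − 1/|k+e|) a_{k+e}² + (1 − 1/|k−e|) a_{k+e} a_{k−e} ] = (1/4) Σ_{k₂ ≥ 1} k₂ Σ_{k₁ ∈ ℤ} [ (1 − 1/|k−e|) a_{k−e}² + (1 − 1/|k+e|) a_{k+e}² + 2( (k₁ + 1/2)(1 − 1/|k−e|) − (k₁ − 1/2)(1 − 1/|k+e|) ) a_{k−e} a_{k+e} ], where k = (k₁,k₂) and both sides converge absolutely. -/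
open scoped BigOperators

set_option maxHeartbeats 1000000

noncomputable section

/-- The summand of the left-hand side of the summation-by-parts identity. -/
def sbpLHS (a : ℤ × ℤ → ℝ) (k : ℤ × ℤ) : ℝ :=
  (k.2 : ℝ) * ((k.1 : ℝ) + 1 / 2) *
    ((1 - 1 / znorm k) * a k ^ 2 -
      (1 - 1 / znorm (k + (2, 0))) * a k * a (k + (2, 0)) -
      (1 - 1 / znorm (k + (1, 0))) * a (k + (1, 0)) ^ 2 +
      (1 - 1 / znorm (k - (1, 0))) * a (k + (1, 0)) * a (k - (1, 0)))

/-- The summand of the right-hand side of the summation-by-parts identity. -/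
def sbpRHS (a : ℤ × ℤ → ℝ) (k₁ k₂ : ℤ) : ℝ :=
  (1 - 1 / znorm ((k₁, k₂) - (1, 0))) * a ((k₁, k₂) - (1, 0)) ^ 2 +
    (1 - 1 / znorm ((k₁, k₂) + (1, 0))) * a ((k₁, k₂) + (1, 0)) ^ 2 +
    2 * (((k₁ : ℝ) + 1 / 2) * (1 - 1 / znorm ((k₁, k₂) - (1, 0))) -
        ((k₁ : ℝ) - 1 / 2) * (1 - 1 / znorm ((k₁, k₂) + (1, 0)))) *
      a ((k₁, k₂) - (1, 0)) * a ((k₁, k₂) + (1, 0))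




lemma abs_fst_le_znorm (k : ℤ × ℤ) : |(k.1 : ℝ)| ≤ znorm k := by
  rw [znorm, ← Real.sqrt_sq_eq_abs]
  exact Real.sqrt_le_sqrt (by nlinarith [sq_nonneg (k.2 : ℝ)])

lemma abs_snd_le_znorm (k : ℤ × ℤ) : |(k.2 : ℝ)| ≤ znorm k := by
  rw [znorm, ← Real.sqrt_sq_eq_abs]
  exact Real.sqrt_le_sqrt (by nlinarith [sq_nonneg (k.1 : ℝ)])

lemma mul_le_znorm_sq (k : ℤ × ℤ) :
    (1 + |(k.1 : ℝ)|) * (1 + |(k.2 : ℝ)|) ≤ (1 + znorm k) ^ 2 := by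
  have h1 := abs_fst_le_znorm k
  have h2 := abs_snd_le_znorm k
  have h3 : |(k.1 : ℝ)| * |(k.2 : ℝ)| ≤ znorm k * znorm k := by
    apply mul_le_mul h1 h2 (abs_nonneg _) (znorm_nonneg k)
  nlinarith [abs_nonneg (k.1 : ℝ), abs_nonneg (k.2 : ℝ)]

/-- `|1 - 1/znorm m| ≤ 1` when the second coordinate is at least 1. -/
lemma cbound (m : ℤ × ℤ) (h : 1 ≤ m.2) : |1 - 1 / znorm m| ≤ 1 := by
  have h1 : (1 : ℝ) ≤ |(m.2 : ℝ)| := by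
    have : (1:ℝ) ≤ (m.2:ℝ) := by exact_mod_cast h
    rw [abs_of_nonneg (by linarith)]; exact this
  have h2 : (1 : ℝ) ≤ znorm m := h1.trans (abs_snd_le_znorm m)
  have h3 : (0 : ℝ) < znorm m := by linarith
  have h4 : 1 / znorm m ≤ 1 := by rw [div_le_one h3]; linarith
  have h5 : 0 < 1 / znorm m := by positivity
  rw [abs_le]; constructor <;> linarith

lemma sZ : Summable fun n : ℤ => 1 / (1 + |(n : ℝ)|) ^ 2 := by
  have hnat : Summable fun n : ℕ => 1 / (1 + (n : ℝ)) ^ 2 := by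
    have := (summable_nat_add_iff (f := fun n : ℕ => 1 / (n : ℝ) ^ 2) 1).mpr
      (Real.summable_one_div_nat_pow.mpr one_lt_two)
    refine this.congr fun n => by push_cast; ring_nf
  refine Summable.of_nat_of_neg (hnat.congr fun n => ?_) (hnat.congr fun n => ?_) <;>
    simp [abs_of_nonneg, Nat.cast_nonneg]

/-- Telescope over ℤ. -/
lemma telescope (G : ℤ → ℝ) (h : Summable G) : ∑' j : ℤ, (G j - G (j + 1)) = 0 := by
  have h2 : Summable fun j : ℤ => G (j + 1) :=
    h.comp_injective (add_left_injective (1 : ℤ))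
  rw [Summable.tsum_sub h h2]
  have : ∑' j : ℤ, G (j + 1) = ∑' j : ℤ, G j := (Equiv.addRight (1 : ℤ)).tsum_eq G
  rw [this, sub_self]

lemma abound (a : ℤ × ℤ → ℝ)
    (hdec : ∀ N : ℕ, ∃ M : ℝ, ∀ k : ℤ × ℤ, (1 + znorm k) ^ N * |a k| ≤ M) (n : ℕ) :
    ∃ C : ℝ, 0 ≤ C ∧ ∀ k : ℤ × ℤ,
      |a k| ≤ C / ((1 + |(k.1 : ℝ)|) ^ n * (1 + |(k.2 : ℝ)|) ^ n) := by
  obtain ⟨M, hM⟩ := hdec (2 * n)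
  have hM0 : 0 ≤ M := le_trans (mul_nonneg (pow_nonneg (by linarith [znorm_nonneg ((0,0) : ℤ × ℤ)]) _) (abs_nonneg _)) (hM (0,0))
  refine ⟨M, hM0, fun k => ?_⟩
  rw [le_div_iff₀ (by positivity)]
  calc |a k| * ((1 + |(k.1 : ℝ)|) ^ n * (1 + |(k.2 : ℝ)|) ^ n)
      ≤ |a k| * (1 + znorm k) ^ (2 * n) := by
        apply mul_le_mul_of_nonneg_left ?_ (abs_nonneg _)
        calc (1 + |(k.1 : ℝ)|) ^ n * (1 + |(k.2 : ℝ)|) ^ n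
            = ((1 + |(k.1 : ℝ)|) * (1 + |(k.2 : ℝ)|)) ^ n := (mul_pow _ _ _).symm
          _ ≤ ((1 + znorm k) ^ 2) ^ n :=
              pow_le_pow_left₀ (by positivity) (mul_le_znorm_sq k) n
          _ = (1 + znorm k) ^ (2 * n) := by rw [← pow_mul]
    _ = (1 + znorm k) ^ (2 * n) * |a k| := mul_comm _ _
    _ ≤ M := hM k

lemma shiftA (j d : ℤ) (hd : |(d : ℝ)| ≤ 2) :
    1 + |(j : ℝ)| ≤ 3 * (1 + |((j + d : ℤ) : ℝ)|) := by
  push_cast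
  have h1 : |(j : ℝ)| ≤ |(j : ℝ) + d| + |(d : ℝ)| := by
    have := abs_add_le ((j : ℝ) + d) (-(d : ℝ))
    simpa using this
  have := abs_nonneg ((j : ℝ) + d)
  linarith

lemma nbr (a : ℤ × ℤ → ℝ)
    (hdec : ∀ N : ℕ, ∃ M : ℝ, ∀ k : ℤ × ℤ, (1 + znorm k) ^ N * |a k| ≤ M) (n : ℕ) :
    ∃ C : ℝ, 0 ≤ C ∧ ∀ d : ℤ, |(d : ℝ)| ≤ 2 → ∀ k : ℤ × ℤ,
      |a (k + (d, 0))| ≤ C / ((1 + |(k.1 : ℝ)|) ^ n * (1 + |(k.2 : ℝ)|) ^ n) := by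
  obtain ⟨C, hC0, hC⟩ := abound a hdec n
  refine ⟨3 ^ n * C, by positivity, fun d hd k => ?_⟩
  have hk : (k + (d, 0) : ℤ × ℤ) = (k.1 + d, k.2) := by ext <;> simp
  rw [hk]
  have h1 := hC (k.1 + d, k.2)
  simp only at h1
  refine h1.trans ?_
  have hpow : (1 + |(k.1 : ℝ)|) ^ n ≤ 3 ^ n * (1 + |((k.1 + d : ℤ) : ℝ)|) ^ n := by
    rw [← mul_pow]; exact pow_le_pow_left₀ (by positivity) (shiftA k.1 d hd) n
  rw [div_le_div_iff₀ (by positivity) (by positivity)]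
  have hY : (0 : ℝ) < (1 + |(k.2 : ℝ)|) ^ n := by positivity
  calc C * ((1 + |(k.1 : ℝ)|) ^ n * (1 + |(k.2 : ℝ)|) ^ n)
      ≤ C * (3 ^ n * (1 + |((k.1 + d : ℤ) : ℝ)|) ^ n * (1 + |(k.2 : ℝ)|) ^ n) := by
        apply mul_le_mul_of_nonneg_left ?_ hC0
        exact mul_le_mul_of_nonneg_right hpow hY.le
    _ = 3 ^ n * C * ((1 + |((k.1 + d : ℤ) : ℝ)|) ^ n * (1 + |(k.2 : ℝ)|) ^ n) := by ring

lemma calcP (A B C₀ C₃ : ℝ) (hA : A ≠ 0) (hB : B ≠ 0) :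
    B * A * (4 * (C₀ * (C₃ / (A ^ 3 * B ^ 3)))) = 4 * C₀ * C₃ * (1 / A ^ 2 * (1 / B ^ 2)) := by
  field_simp

lemma calcPQ (A B C₀ C₃ : ℝ) (hA : A ≠ 0) (hB : B ≠ 0) :
    6 * A * (C₀ * (C₃ / (A ^ 3 * B ^ 3))) = 6 * C₀ * C₃ * (1 / A ^ 2 * (1 / B ^ 3)) := by
  field_simp

lemma lhs_bound (a : ℤ × ℤ → ℝ)
    (hdec : ∀ N : ℕ, ∃ M : ℝ, ∀ k : ℤ × ℤ, (1 + znorm k) ^ N * |a k| ≤ M) :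
    ∃ K : ℝ, 0 ≤ K ∧ ∀ k : ℤ × ℤ, 1 ≤ k.2 →
      |sbpLHS a k| ≤ K * (1 / (1 + |(k.1 : ℝ)|) ^ 2 * (1 / (1 + |(k.2 : ℝ)|) ^ 2)) := by
  obtain ⟨C₀, hC₀0, hC₀⟩ := nbr a hdec 0
  obtain ⟨C₃, hC₃0, hC₃⟩ := nbr a hdec 3
  refine ⟨4 * C₀ * C₃, by positivity, fun k hk => ?_⟩
  set A := 1 + |(k.1 : ℝ)| with hA
  set B := 1 + |(k.2 : ℝ)| with hB
  have hA0 : (0:ℝ) < A := by positivity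
  have hB0 : (0:ℝ) < B := by positivity
  set P := C₀ * (C₃ / (A ^ 3 * B ^ 3)) with hP
  have hP0 : 0 ≤ P := by positivity
  have ha0 : ∀ d : ℤ, |(d : ℝ)| ≤ 2 → |a (k + (d, 0))| ≤ C₀ := by
    intro d hd; have := hC₀ d hd k; simpa using this
  have ha3 : ∀ d : ℤ, |(d : ℝ)| ≤ 2 → |a (k + (d, 0))| ≤ C₃ / (A ^ 3 * B ^ 3) :=
    fun d hd => hC₃ d hd k
  have e0 : k + ((0:ℤ), (0:ℤ)) = k := by simp
  have ex : ∀ m : ℤ × ℤ, (k + m).2 = k.2 + m.2 := fun m => rfl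
  have hsub : k - ((1:ℤ), (0:ℤ)) = k + (-1, 0) := by ext <;> simp [sub_eq_add_neg]
  -- c bounds
  have hc0 : |1 - 1 / znorm k| ≤ 1 := cbound k hk
  have hc2 : |1 - 1 / znorm (k + (2, 0))| ≤ 1 := cbound _ (by simpa [ex] using hk)
  have hc1 : |1 - 1 / znorm (k + (1, 0))| ≤ 1 := cbound _ (by simpa [ex] using hk)
  have hcm : |1 - 1 / znorm (k + (-1, 0))| ≤ 1 := cbound _ (by simpa [ex] using hk)
  -- a bounds at specific points
  have hx0 : |a k| ≤ C₀ := by rw [← e0]; exact ha0 0 (by norm_num)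
  have hx3 : |a k| ≤ C₃ / (A ^ 3 * B ^ 3) := by rw [← e0]; exact ha3 0 (by norm_num)
  have hy0 : |a (k + (2, 0))| ≤ C₀ := ha0 2 (by norm_num)
  have hy3 : |a (k + (2, 0))| ≤ C₃ / (A ^ 3 * B ^ 3) := ha3 2 (by norm_num)
  have hz0 : |a (k + (1, 0))| ≤ C₀ := ha0 1 (by norm_num)
  have hz3 : |a (k + (1, 0))| ≤ C₃ / (A ^ 3 * B ^ 3) := ha3 1 (by norm_num)
  have hw3 : |a (k + (-1, 0))| ≤ C₃ / (A ^ 3 * B ^ 3) := ha3 (-1) (by norm_num)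
  rw [sbpLHS, hsub]
  set c0 := 1 - 1 / znorm k
  set c2 := 1 - 1 / znorm (k + (2, 0))
  set c1 := 1 - 1 / znorm (k + (1, 0))
  set cm := 1 - 1 / znorm (k + (-1, 0))
  set x := a k
  set y := a (k + (2, 0))
  set z := a (k + (1, 0))
  set w := a (k + (-1, 0))
  have t1 : |c0 * x ^ 2| ≤ P := by
    rw [abs_mul, abs_pow]
    nlinarith [abs_nonneg x, abs_nonneg c0]
  have t2 : |c2 * x * y| ≤ P := by
    rw [abs_mul, abs_mul]
    have h1 : |c2| * |x| ≤ C₀ := by nlinarith [abs_nonneg x, abs_nonneg c2]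
    exact mul_le_mul h1 hy3 (abs_nonneg y) hC₀0
  have t3 : |c1 * z ^ 2| ≤ P := by
    rw [abs_mul, abs_pow]
    nlinarith [abs_nonneg z, abs_nonneg c1]
  have t4 : |cm * z * w| ≤ P := by
    rw [abs_mul, abs_mul]
    have h1 : |cm| * |z| ≤ C₀ := by nlinarith [abs_nonneg z, abs_nonneg cm]
    exact mul_le_mul h1 hw3 (abs_nonneg w) hC₀0
  have hE : |c0 * x ^ 2 - c2 * x * y - c1 * z ^ 2 + cm * z * w| ≤ 4 * P := by
    calc |c0 * x ^ 2 - c2 * x * y - c1 * z ^ 2 + cm * z * w|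
        ≤ |c0 * x ^ 2 - c2 * x * y - c1 * z ^ 2| + |cm * z * w| := abs_add_le _ _
      _ ≤ |c0 * x ^ 2 - c2 * x * y| + |c1 * z ^ 2| + |cm * z * w| := by
          linarith [abs_sub (c0 * x ^ 2 - c2 * x * y) (c1 * z ^ 2)]
      _ ≤ |c0 * x ^ 2| + |c2 * x * y| + |c1 * z ^ 2| + |cm * z * w| := by
          linarith [abs_sub (c0 * x ^ 2) (c2 * x * y)]
      _ ≤ 4 * P := by linarith
  have hk2 : |(k.2 : ℝ)| ≤ B := by rw [hB]; linarith [abs_nonneg (k.2 : ℝ)]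
  have hk1 : |(k.1 : ℝ) + 1 / 2| ≤ A := by
    rw [hA]
    calc |(k.1 : ℝ) + 1 / 2| ≤ |(k.1 : ℝ)| + |(1:ℝ)/2| := abs_add_le _ _
      _ ≤ 1 + |(k.1 : ℝ)| := by
          rw [show |(1:ℝ)/2| = 1/2 by norm_num]; linarith [abs_nonneg (k.1 : ℝ)]
  calc |(k.2 : ℝ) * ((k.1 : ℝ) + 1 / 2) * (c0 * x ^ 2 - c2 * x * y - c1 * z ^ 2 + cm * z * w)|
      = |(k.2 : ℝ)| * |(k.1 : ℝ) + 1 / 2| *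
          |c0 * x ^ 2 - c2 * x * y - c1 * z ^ 2 + cm * z * w| := by
        rw [abs_mul, abs_mul]
    _ ≤ B * A * (4 * P) := by
        apply mul_le_mul (mul_le_mul hk2 hk1 (abs_nonneg _) hB0.le) hE (abs_nonneg _)
        positivity
    _ = 4 * C₀ * C₃ * (1 / A ^ 2 * (1 / B ^ 2)) := by
        rw [hP]; exact calcP A B C₀ C₃ (ne_of_gt hA0) (ne_of_gt hB0)

lemma rhs_bound (a : ℤ × ℤ → ℝ)
    (hdec : ∀ N : ℕ, ∃ M : ℝ, ∀ k : ℤ × ℤ, (1 + znorm k) ^ N * |a k| ≤ M) :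
    ∃ K : ℝ, 0 ≤ K ∧ ∀ k₁ k₂ : ℤ, 1 ≤ k₂ →
      |sbpRHS a k₁ k₂| ≤ K * (1 / (1 + |(k₁ : ℝ)|) ^ 2 * (1 / (1 + |(k₂ : ℝ)|) ^ 3)) := by
  obtain ⟨C₀, hC₀0, hC₀⟩ := nbr a hdec 0
  obtain ⟨C₃, hC₃0, hC₃⟩ := nbr a hdec 3
  refine ⟨6 * C₀ * C₃, by positivity, fun k₁ k₂ hk => ?_⟩
  set A := 1 + |(k₁ : ℝ)| with hA
  set B := 1 + |(k₂ : ℝ)| with hB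
  have hA0 : (0:ℝ) < A := by positivity
  have hB0 : (0:ℝ) < B := by positivity
  have hA1 : (1:ℝ) ≤ A := by rw [hA]; linarith [abs_nonneg (k₁ : ℝ)]
  set P := C₀ * (C₃ / (A ^ 3 * B ^ 3)) with hP
  have hP0 : 0 ≤ P := by positivity
  have hsub : ((k₁, k₂) : ℤ × ℤ) - (1, 0) = ((k₁, k₂) : ℤ × ℤ) + (-1, 0) := by
    ext <;> simp [sub_eq_add_neg]
  have hm0 : |a (((k₁, k₂) : ℤ × ℤ) + (-1, 0))| ≤ C₀ := by
    simpa using hC₀ (-1) (by norm_num) (k₁, k₂)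
  have hm3 : |a (((k₁, k₂) : ℤ × ℤ) + (-1, 0))| ≤ C₃ / (A ^ 3 * B ^ 3) := by
    simpa using hC₃ (-1) (by norm_num) (k₁, k₂)
  have hp0 : |a (((k₁, k₂) : ℤ × ℤ) + (1, 0))| ≤ C₀ := by
    simpa using hC₀ 1 (by norm_num) (k₁, k₂)
  have hp3 : |a (((k₁, k₂) : ℤ × ℤ) + (1, 0))| ≤ C₃ / (A ^ 3 * B ^ 3) := by
    simpa using hC₃ 1 (by norm_num) (k₁, k₂)
  have hcm : |1 - 1 / znorm (((k₁, k₂) : ℤ × ℤ) + (-1, 0))| ≤ 1 := cbound _ (by simpa using hk)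
  have hcp : |1 - 1 / znorm (((k₁, k₂) : ℤ × ℤ) + (1, 0))| ≤ 1 := cbound _ (by simpa using hk)
  rw [sbpRHS, hsub]
  set cm := 1 - 1 / znorm (((k₁, k₂) : ℤ × ℤ) + (-1, 0))
  set cp := 1 - 1 / znorm (((k₁, k₂) : ℤ × ℤ) + (1, 0))
  set x := a (((k₁, k₂) : ℤ × ℤ) + (-1, 0))
  set y := a (((k₁, k₂) : ℤ × ℤ) + (1, 0))
  have hq1 : |(k₁ : ℝ) + 1 / 2| ≤ A := by
    rw [hA]
    calc |(k₁ : ℝ) + 1 / 2| ≤ |(k₁ : ℝ)| + |(1:ℝ)/2| := abs_add_le _ _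
      _ ≤ 1 + |(k₁ : ℝ)| := by
          rw [show |(1:ℝ)/2| = 1/2 by norm_num]; linarith [abs_nonneg (k₁ : ℝ)]
  have hq2 : |(k₁ : ℝ) - 1 / 2| ≤ A := by
    rw [hA]
    calc |(k₁ : ℝ) - 1 / 2| ≤ |(k₁ : ℝ)| + |(1:ℝ)/2| := abs_sub _ _
      _ ≤ 1 + |(k₁ : ℝ)| := by
          rw [show |(1:ℝ)/2| = 1/2 by norm_num]; linarith [abs_nonneg (k₁ : ℝ)]
  have t1 : |cm * x ^ 2| ≤ P := by
    rw [abs_mul, abs_pow]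
    nlinarith [abs_nonneg x, abs_nonneg cm]
  have t2 : |cp * y ^ 2| ≤ P := by
    rw [abs_mul, abs_pow]
    nlinarith [abs_nonneg y, abs_nonneg cp]
  have t3 : |2 * (((k₁ : ℝ) + 1 / 2) * cm - ((k₁ : ℝ) - 1 / 2) * cp) * x * y| ≤ 4 * A * P := by
    rw [abs_mul, abs_mul, abs_mul]
    have h1 : |((k₁ : ℝ) + 1 / 2) * cm - ((k₁ : ℝ) - 1 / 2) * cp| ≤ 2 * A := by
      calc |((k₁ : ℝ) + 1 / 2) * cm - ((k₁ : ℝ) - 1 / 2) * cp|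
          ≤ |((k₁ : ℝ) + 1 / 2) * cm| + |((k₁ : ℝ) - 1 / 2) * cp| := abs_sub _ _
        _ ≤ A + A := by
            rw [abs_mul, abs_mul]
            have e1 : |(k₁ : ℝ) + 1/2| * |cm| ≤ A := by
              nlinarith [abs_nonneg cm, abs_nonneg ((k₁ : ℝ) + 1/2)]
            have e2 : |(k₁ : ℝ) - 1/2| * |cp| ≤ A := by
              nlinarith [abs_nonneg cp, abs_nonneg ((k₁ : ℝ) - 1/2)]
            linarith
        _ = 2 * A := by ring
    have h2 : |(2:ℝ)| * |((k₁ : ℝ) + 1 / 2) * cm - ((k₁ : ℝ) - 1 / 2) * cp| ≤ 4 * A := by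
      rw [show |(2:ℝ)| = 2 by norm_num]; linarith
    have h3 : |x| * |y| ≤ C₀ * (C₃ / (A ^ 3 * B ^ 3)) :=
      mul_le_mul hm0 hp3 (abs_nonneg y) hC₀0
    calc |(2:ℝ)| * |((k₁ : ℝ) + 1 / 2) * cm - ((k₁ : ℝ) - 1 / 2) * cp| * |x| * |y|
        ≤ (4 * A) * (|x| * |y|) := by
          rw [mul_assoc]
          apply mul_le_mul h2 le_rfl (by positivity) (by positivity)
      _ ≤ (4 * A) * P := by
          apply mul_le_mul_of_nonneg_left h3 (by positivity)
      _ = 4 * A * P := by ring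
  calc |cm * x ^ 2 + cp * y ^ 2 +
        2 * (((k₁ : ℝ) + 1 / 2) * cm - ((k₁ : ℝ) - 1 / 2) * cp) * x * y|
      ≤ |cm * x ^ 2 + cp * y ^ 2| +
        |2 * (((k₁ : ℝ) + 1 / 2) * cm - ((k₁ : ℝ) - 1 / 2) * cp) * x * y| := abs_add_le _ _
    _ ≤ |cm * x ^ 2| + |cp * y ^ 2| +
        |2 * (((k₁ : ℝ) + 1 / 2) * cm - ((k₁ : ℝ) - 1 / 2) * cp) * x * y| := by
        linarith [abs_add_le (cm * x ^ 2) (cp * y ^ 2)]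
    _ ≤ 2 * P + 4 * A * P := by linarith
    _ ≤ 6 * A * P := by nlinarith [mul_le_mul_of_nonneg_right hA1 hP0]
    _ = 6 * C₀ * C₃ * (1 / A ^ 2 * (1 / B ^ 3)) := by
        rw [hP]; exact calcPQ A B C₀ C₃ (ne_of_gt hA0) (ne_of_gt hB0)

/-- Telescoping weight for the row-wise summation by parts. -/
def rowG (a : ℤ × ℤ → ℝ) (k₂ j : ℤ) : ℝ :=
  (k₂ : ℝ) * (2 * (j : ℝ) * (1 - 1 / znorm (j, k₂)) * a (j, k₂) ^ 2 +
    (1 - 1 / znorm (j + 1, k₂)) * a (j + 1, k₂) ^ 2 +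
    (2 * (j : ℝ) + 1) * (1 - 1 / znorm (j - 1, k₂)) * a (j - 1, k₂) * a (j + 1, k₂))

lemma row_ptwise (a : ℤ × ℤ → ℝ) (k₂ j : ℤ) :
    2 * sbpLHS a (j, k₂) =
      (k₂ : ℝ) * sbpRHS a (j + 1) k₂ + (rowG a k₂ j - rowG a k₂ (j + 1)) := by
  have h2 : ((j, k₂) : ℤ × ℤ) + (2, 0) = (j + 2, k₂) := by ext <;> simp
  have h1 : ((j, k₂) : ℤ × ℤ) + (1, 0) = (j + 1, k₂) := by ext <;> simp
  have hm : ((j, k₂) : ℤ × ℤ) - (1, 0) = (j - 1, k₂) := by ext <;> simp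
  have hp1m : ((j + 1, k₂) : ℤ × ℤ) - (1, 0) = (j, k₂) := by ext <;> simp
  have hp1p : ((j + 1, k₂) : ℤ × ℤ) + (1, 0) = (j + 2, k₂) := by
    ext <;> simp <;> ring
  have e1 : (j + 1 + 1 : ℤ) = j + 2 := by ring
  have e2 : (j + 1 - 1 : ℤ) = j := by ring
  simp only [sbpLHS, sbpRHS, rowG, h2, h1, hm, hp1m, hp1p, e1, e2]
  push_cast
  ring

lemma calcG (A B C₀ C₃ : ℝ) (hA : 1 ≤ A) (hB : 1 ≤ B) (h0 : 0 ≤ C₀) (h3 : 0 ≤ C₃) :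
    B * (6 * A * (C₀ * (C₃ / (A ^ 3 * B ^ 3)))) ≤ 6 * C₀ * C₃ * (1 / A ^ 2) := by
  have hA0 : (0:ℝ) < A := lt_of_lt_of_le one_pos hA
  have hB0 : (0:ℝ) < B := lt_of_lt_of_le one_pos hB
  have e : B * (6 * A * (C₀ * (C₃ / (A ^ 3 * B ^ 3)))) =
      6 * C₀ * C₃ * (1 / A ^ 2) * (1 / B ^ 2) := by field_simp
  rw [e]
  have h1 : 1 / B ^ 2 ≤ 1 := by rw [div_le_one (by positivity)]; nlinarith
  calc 6 * C₀ * C₃ * (1 / A ^ 2) * (1 / B ^ 2) ≤ 6 * C₀ * C₃ * (1 / A ^ 2) * 1 :=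
        mul_le_mul_of_nonneg_left h1 (by positivity)
    _ = 6 * C₀ * C₃ * (1 / A ^ 2) := mul_one _

lemma rowG_bound (a : ℤ × ℤ → ℝ)
    (hdec : ∀ N : ℕ, ∃ M : ℝ, ∀ k : ℤ × ℤ, (1 + znorm k) ^ N * |a k| ≤ M) :
    ∃ K : ℝ, 0 ≤ K ∧ ∀ k₂ : ℤ, 1 ≤ k₂ → ∀ j : ℤ,
      |rowG a k₂ j| ≤ K * (1 / (1 + |(j : ℝ)|) ^ 2) := by
  obtain ⟨C₀, hC₀0, hC₀⟩ := nbr a hdec 0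
  obtain ⟨C₃, hC₃0, hC₃⟩ := nbr a hdec 3
  refine ⟨6 * C₀ * C₃, by positivity, fun k₂ hk j => ?_⟩
  set A := 1 + |(j : ℝ)| with hA
  set B := 1 + |(k₂ : ℝ)| with hB
  have hA0 : (0:ℝ) < A := by positivity
  have hB0 : (0:ℝ) < B := by positivity
  have hA1 : (1:ℝ) ≤ A := by rw [hA]; linarith [abs_nonneg (j : ℝ)]
  have hB1 : (1:ℝ) ≤ B := by
    rw [hB]; linarith [abs_nonneg (k₂ : ℝ)]
  set P := C₀ * (C₃ / (A ^ 3 * B ^ 3)) with hP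
  have hP0 : 0 ≤ P := by positivity
  have hpt : ∀ d : ℤ, ((j, k₂) : ℤ × ℤ) + (d, 0) = (j + d, k₂) := by
    intro d; ext <;> simp
  have ha0 : ∀ d : ℤ, |(d : ℝ)| ≤ 2 → |a (j + d, k₂)| ≤ C₀ := by
    intro d hd; have := hC₀ d hd (j, k₂); rw [hpt d] at this; simpa using this
  have ha3 : ∀ d : ℤ, |(d : ℝ)| ≤ 2 → |a (j + d, k₂)| ≤ C₃ / (A ^ 3 * B ^ 3) := by
    intro d hd; have := hC₃ d hd (j, k₂); rwa [hpt d] at this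
  have hx0 : |a (j, k₂)| ≤ C₀ := by simpa using ha0 0 (by norm_num)
  have hx3 : |a (j, k₂)| ≤ C₃ / (A ^ 3 * B ^ 3) := by simpa using ha3 0 (by norm_num)
  have hp0' : |a (j + 1, k₂)| ≤ C₀ := ha0 1 (by norm_num)
  have hp3 : |a (j + 1, k₂)| ≤ C₃ / (A ^ 3 * B ^ 3) := ha3 1 (by norm_num)
  have hm3 : |a (j - 1, k₂)| ≤ C₃ / (A ^ 3 * B ^ 3) := by
    have := ha3 (-1) (by norm_num); simpa [sub_eq_add_neg] using this
  have hm0 : |a (j - 1, k₂)| ≤ C₀ := by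
    have := ha0 (-1) (by norm_num); simpa [sub_eq_add_neg] using this
  have hc0 : |1 - 1 / znorm (j, k₂)| ≤ 1 := cbound _ hk
  have hcp : |1 - 1 / znorm (j + 1, k₂)| ≤ 1 := cbound _ hk
  have hcm : |1 - 1 / znorm (j - 1, k₂)| ≤ 1 := cbound _ hk
  set c0 := 1 - 1 / znorm (j, k₂)
  set cp := 1 - 1 / znorm (j + 1, k₂)
  set cm := 1 - 1 / znorm (j - 1, k₂)
  set x := a (j, k₂)
  set y := a (j + 1, k₂)
  set w := a (j - 1, k₂)
  have hj : |2 * (j : ℝ)| ≤ 2 * A := by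
    rw [abs_mul, show |(2:ℝ)| = 2 by norm_num]; rw [hA]
    nlinarith [abs_nonneg (j : ℝ)]
  have hj1 : |2 * (j : ℝ) + 1| ≤ 3 * A := by
    calc |2 * (j : ℝ) + 1| ≤ |2 * (j : ℝ)| + |(1:ℝ)| := abs_add_le _ _
      _ ≤ 2 * A + 1 := by rw [show |(1:ℝ)| = 1 by norm_num]; linarith
      _ ≤ 3 * A := by linarith
  have t1 : |2 * (j : ℝ) * c0 * x ^ 2| ≤ 2 * A * P := by
    rw [abs_mul, abs_mul, abs_pow]
    have h1 : |2 * (j : ℝ)| * |c0| ≤ 2 * A := by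
      nlinarith [abs_nonneg (2 * (j : ℝ)), abs_nonneg c0]
    have h2 : |x| ^ 2 ≤ P := by nlinarith [abs_nonneg x]
    nlinarith [abs_nonneg (2 * (j : ℝ)), abs_nonneg c0, sq_nonneg |x|, pow_nonneg (abs_nonneg x) 2]
  have t2 : |cp * y ^ 2| ≤ P := by
    rw [abs_mul, abs_pow]
    nlinarith [abs_nonneg y, abs_nonneg cp]
  have t3 : |(2 * (j : ℝ) + 1) * cm * w * y| ≤ 3 * A * P := by
    rw [abs_mul, abs_mul, abs_mul]
    have h1 : |2 * (j : ℝ) + 1| * |cm| ≤ 3 * A := by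
      nlinarith [abs_nonneg (2 * (j : ℝ) + 1), abs_nonneg cm]
    have h2 : |w| * |y| ≤ P := by
      rw [hP]; exact mul_le_mul hm0 hp3 (abs_nonneg y) hC₀0
    calc |2 * (j : ℝ) + 1| * |cm| * |w| * |y| = (|2 * (j : ℝ) + 1| * |cm|) * (|w| * |y|) := by ring
      _ ≤ 3 * A * P := by
          apply mul_le_mul h1 h2 (by positivity) (by positivity)
  rw [rowG, abs_mul]
  have hE : |2 * (j : ℝ) * c0 * x ^ 2 + cp * y ^ 2 + (2 * (j : ℝ) + 1) * cm * w * y|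
      ≤ 6 * A * P := by
    calc |2 * (j : ℝ) * c0 * x ^ 2 + cp * y ^ 2 + (2 * (j : ℝ) + 1) * cm * w * y|
        ≤ |2 * (j : ℝ) * c0 * x ^ 2 + cp * y ^ 2| + |(2 * (j : ℝ) + 1) * cm * w * y| :=
          abs_add_le _ _
      _ ≤ |2 * (j : ℝ) * c0 * x ^ 2| + |cp * y ^ 2| + |(2 * (j : ℝ) + 1) * cm * w * y| := by
          linarith [abs_add_le (2 * (j : ℝ) * c0 * x ^ 2) (cp * y ^ 2)]
      _ ≤ 2 * A * P + P + 3 * A * P := by linarith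
      _ ≤ 6 * A * P := by nlinarith
  have hk2 : |(k₂ : ℝ)| ≤ B := by rw [hB]; linarith [abs_nonneg (k₂ : ℝ)]
  calc |(k₂ : ℝ)| * |2 * (j : ℝ) * c0 * x ^ 2 + cp * y ^ 2 + (2 * (j : ℝ) + 1) * cm * w * y|
      ≤ B * (6 * A * P) := mul_le_mul hk2 hE (abs_nonneg _) hB0.le
    _ ≤ 6 * C₀ * C₃ * (1 / A ^ 2) := by
        rw [hP]; exact calcG A B C₀ C₃ hA1 hB1 hC₀0 hC₃0

/-- Summation-by-parts identity for the main term `Σ`: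
`(1/2) Σ_{k∈ℤ²₊} k₂(k₁+1/2)[...] = (1/4) Σ_{k₂≥1} k₂ Σ_{k₁}[...]`,
with both sides converging absolutely. -/
theorem summation_by_parts (a : ℤ × ℤ → ℝ)
    (hdec : ∀ N : ℕ, ∃ M : ℝ, ∀ k : ℤ × ℤ, (1 + znorm k) ^ N * |a k| ≤ M) :
    (Summable fun k : ℤ × ℤ => if 1 ≤ k.2 then |sbpLHS a k| else 0) ∧
    (∀ k₂ : ℤ, 1 ≤ k₂ → Summable fun k₁ : ℤ => |sbpRHS a k₁ k₂|) ∧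
    (Summable fun k₂ : ℤ =>
      if 1 ≤ k₂ then |(k₂ : ℝ) * ∑' k₁ : ℤ, sbpRHS a k₁ k₂| else 0) ∧
    (1 / 2) * (∑' k : ℤ × ℤ, if 1 ≤ k.2 then sbpLHS a k else 0) =
      (1 / 4) * ∑' k₂ : ℤ, if 1 ≤ k₂ then (k₂ : ℝ) * ∑' k₁ : ℤ, sbpRHS a k₁ k₂ else 0 := by
  classical
  obtain ⟨KL, hKL0, hKL⟩ := lhs_bound a hdec
  obtain ⟨KR, hKR0, hKR⟩ := rhs_bound a hdec
  obtain ⟨KG, hKG0, hKG⟩ := rowG_bound a hdec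
  have sZZ : Summable fun k : ℤ × ℤ =>
      1 / (1 + |(k.1 : ℝ)|) ^ 2 * (1 / (1 + |(k.2 : ℝ)|) ^ 2) :=
    sZ.mul_of_nonneg sZ (fun n => by positivity) (fun n => by positivity)
  have S1 : Summable fun k : ℤ × ℤ => if 1 ≤ k.2 then |sbpLHS a k| else 0 := by
    apply Summable.of_nonneg_of_le (fun k => by positivity) (fun k => ?_) (sZZ.mul_left KL)
    by_cases h : 1 ≤ k.2
    · rw [if_pos h]; exact hKL k h
    · rw [if_neg h]; positivity
  have S2 : ∀ k₂ : ℤ, 1 ≤ k₂ → Summable fun k₁ : ℤ => |sbpRHS a k₁ k₂| := by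
    intro k₂ hk
    exact Summable.of_nonneg_of_le (fun _ => abs_nonneg _) (fun k₁ => hKR k₁ k₂ hk)
      ((sZ.mul_right (1 / (1 + |(k₂ : ℝ)|) ^ 3)).mul_left KR)
  have SRrow : ∀ k₂ : ℤ, 1 ≤ k₂ → Summable fun k₁ : ℤ => sbpRHS a k₁ k₂ :=
    fun k₂ h => Summable.of_abs (S2 k₂ h)
  have SLrow : ∀ k₂ : ℤ, 1 ≤ k₂ → Summable fun j : ℤ => sbpLHS a (j, k₂) := by
    intro k₂ h
    apply Summable.of_abs
    exact Summable.of_nonneg_of_le (fun _ => abs_nonneg _) (fun j => hKL (j, k₂) h)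
      ((sZ.mul_right (1 / (1 + |(k₂ : ℝ)|) ^ 2)).mul_left KL)
  have SG : ∀ k₂ : ℤ, 1 ≤ k₂ → Summable (rowG a k₂) := by
    intro k₂ h
    apply Summable.of_abs
    exact Summable.of_nonneg_of_le (fun _ => abs_nonneg _) (fun j => hKG k₂ h j)
      (sZ.mul_left KG)
  have row_id : ∀ k₂ : ℤ, 1 ≤ k₂ →
      2 * ∑' j : ℤ, sbpLHS a (j, k₂) = (k₂ : ℝ) * ∑' j : ℤ, sbpRHS a j k₂ := by
    intro k₂ hk
    have hshift : Summable fun j : ℤ => sbpRHS a (j + 1) k₂ :=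
      (SRrow k₂ hk).comp_injective (add_left_injective (1 : ℤ))
    have hGshift : Summable fun j : ℤ => rowG a k₂ (j + 1) :=
      (SG k₂ hk).comp_injective (add_left_injective (1 : ℤ))
    have hGs : Summable fun j : ℤ => rowG a k₂ j - rowG a k₂ (j + 1) :=
      (SG k₂ hk).sub hGshift
    calc 2 * ∑' j : ℤ, sbpLHS a (j, k₂) = ∑' j : ℤ, 2 * sbpLHS a (j, k₂) :=
          tsum_mul_left.symm
      _ = ∑' j : ℤ, ((k₂ : ℝ) * sbpRHS a (j + 1) k₂ +
            (rowG a k₂ j - rowG a k₂ (j + 1))) := tsum_congr (fun j => row_ptwise a k₂ j)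
      _ = (∑' j : ℤ, (k₂ : ℝ) * sbpRHS a (j + 1) k₂) +
            ∑' j : ℤ, (rowG a k₂ j - rowG a k₂ (j + 1)) :=
          Summable.tsum_add (hshift.mul_left _) hGs
      _ = (k₂ : ℝ) * ∑' j : ℤ, sbpRHS a (j + 1) k₂ + 0 := by
          rw [tsum_mul_left, telescope _ (SG k₂ hk)]
      _ = (k₂ : ℝ) * ∑' j : ℤ, sbpRHS a j k₂ := by
          rw [add_zero]
          congr 1
          exact (Equiv.addRight (1 : ℤ)).tsum_eq (fun j => sbpRHS a j k₂)
  have SZc0 : 0 ≤ ∑' n : ℤ, 1 / (1 + |(n : ℝ)|) ^ 2 :=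
    tsum_nonneg (fun n => by positivity)
  set SZc := ∑' n : ℤ, 1 / (1 + |(n : ℝ)|) ^ 2 with hSZc
  have SR3 : Summable fun k₂ : ℤ =>
      if 1 ≤ k₂ then |(k₂ : ℝ) * ∑' k₁ : ℤ, sbpRHS a k₁ k₂| else 0 := by
    apply Summable.of_nonneg_of_le (fun k₂ => by positivity) (fun k₂ => ?_)
      (sZ.mul_left (KR * SZc))
    by_cases hk : 1 ≤ k₂
    · rw [if_pos hk]
      have h1 : |∑' k₁ : ℤ, sbpRHS a k₁ k₂| ≤ ∑' k₁ : ℤ, |sbpRHS a k₁ k₂| := by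
        have := norm_tsum_le_tsum_norm (f := fun k₁ : ℤ => sbpRHS a k₁ k₂)
          (by simpa [Real.norm_eq_abs] using S2 k₂ hk)
        simpa [Real.norm_eq_abs] using this
      have h2 : ∑' k₁ : ℤ, |sbpRHS a k₁ k₂| ≤
          ∑' k₁ : ℤ, KR * (1 / (1 + |(k₁ : ℝ)|) ^ 2 * (1 / (1 + |(k₂ : ℝ)|) ^ 3)) :=
        Summable.tsum_le_tsum (fun k₁ => hKR k₁ k₂ hk) (S2 k₂ hk)
          ((sZ.mul_right (1 / (1 + |(k₂ : ℝ)|) ^ 3)).mul_left KR)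
      have h3 : ∑' k₁ : ℤ, KR * (1 / (1 + |(k₁ : ℝ)|) ^ 2 * (1 / (1 + |(k₂ : ℝ)|) ^ 3)) =
          KR * (1 / (1 + |(k₂ : ℝ)|) ^ 3) * SZc := by
        calc ∑' k₁ : ℤ, KR * (1 / (1 + |(k₁ : ℝ)|) ^ 2 * (1 / (1 + |(k₂ : ℝ)|) ^ 3))
            = ∑' k₁ : ℤ, KR * (1 / (1 + |(k₂ : ℝ)|) ^ 3) * (1 / (1 + |(k₁ : ℝ)|) ^ 2) :=
              tsum_congr (fun k₁ => by ring)
          _ = KR * (1 / (1 + |(k₂ : ℝ)|) ^ 3) * SZc := tsum_mul_left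
      have hB0 : (0:ℝ) < 1 + |(k₂ : ℝ)| := by positivity
      have hk2 : |(k₂ : ℝ)| ≤ 1 + |(k₂ : ℝ)| := by linarith [abs_nonneg (k₂ : ℝ)]
      calc |(k₂ : ℝ) * ∑' k₁ : ℤ, sbpRHS a k₁ k₂|
          = |(k₂ : ℝ)| * |∑' k₁ : ℤ, sbpRHS a k₁ k₂| := abs_mul _ _
        _ ≤ (1 + |(k₂ : ℝ)|) * (KR * (1 / (1 + |(k₂ : ℝ)|) ^ 3) * SZc) := by
            apply mul_le_mul hk2 (h1.trans (h2.trans_eq h3)) (abs_nonneg _) hB0.le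
        _ = KR * SZc * (1 / (1 + |(k₂ : ℝ)|) ^ 2) := by field_simp
    · rw [if_neg hk]; positivity
  refine ⟨S1, S2, SR3, ?_⟩
  have hF : Summable fun k : ℤ × ℤ => if 1 ≤ k.2 then sbpLHS a k else 0 := by
    apply Summable.of_abs
    apply S1.congr
    intro k; split <;> simp
  have hFc : Summable fun q : ℤ × ℤ =>
      if 1 ≤ q.1 then sbpLHS a (q.2, q.1) else 0 := by
    have := (Equiv.prodComm ℤ ℤ).summable_iff.mpr hF
    exact this.congr (fun q => rfl)
  have hrowF : ∀ k₂ : ℤ, Summable fun k₁ : ℤ =>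
      if 1 ≤ k₂ then sbpLHS a (k₁, k₂) else 0 := by
    intro k₂
    by_cases h : 1 ≤ k₂
    · exact (SLrow k₂ h).congr (fun k₁ => by rw [if_pos h])
    · exact summable_zero.congr (fun k₁ => by rw [if_neg h])
  have step1 : (∑' k : ℤ × ℤ, if 1 ≤ k.2 then sbpLHS a k else 0) =
      ∑' k₂ : ℤ, ∑' k₁ : ℤ, (if 1 ≤ k₂ then sbpLHS a (k₁, k₂) else 0) := by
    rw [← (Equiv.prodComm ℤ ℤ).tsum_eq (fun k : ℤ × ℤ => if 1 ≤ k.2 then sbpLHS a k else 0)]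
    exact Summable.tsum_prod' hFc (fun k₂ => hrowF k₂)
  have step2 : ∀ k₂ : ℤ, (∑' k₁ : ℤ, if 1 ≤ k₂ then sbpLHS a (k₁, k₂) else 0) =
      (1 / 2) * (if 1 ≤ k₂ then (k₂ : ℝ) * ∑' k₁ : ℤ, sbpRHS a k₁ k₂ else 0) := by
    intro k₂
    by_cases h : 1 ≤ k₂
    · rw [if_pos h]
      have e : (∑' k₁ : ℤ, if 1 ≤ k₂ then sbpLHS a (k₁, k₂) else 0) =
          ∑' j : ℤ, sbpLHS a (j, k₂) := tsum_congr (fun j => if_pos h)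
      rw [e]
      linarith [row_id k₂ h]
    · rw [if_neg h]
      rw [mul_zero]
      calc (∑' k₁ : ℤ, if 1 ≤ k₂ then sbpLHS a (k₁, k₂) else 0)
          = ∑' k₁ : ℤ, (0:ℝ) := tsum_congr (fun j => if_neg h)
        _ = 0 := tsum_zero
  rw [step1]
  rw [tsum_congr step2, tsum_mul_left]
  ring
end
end
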